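/- For all graphs G1, G2 and every integer k ≥ 2, α_k(G1 · G2) = α_k(G1) + ι(G1) · (α_k(G2) − 1), where ι(G1) is the number of isolated vertices of G1. -/

import Mathlib

open SimpleGraph

/-- The `k`-independence number: the maximum size of a set of vertices at pairwise
distance greater than `k`. -/
noncomputable def kIndepNum {V : Type*} [Fintype V] (G : SimpleGraph V) (k : ℕ) : ℕ :=
  sSup {n | ∃ s : Finset V, s.card = n ∧ ∀ u ∈ s, ∀ v ∈ s, u ≠ v → (k : ℕ∞) < G.edist u v}

/-- The lexicographic product of two simple graphs. -/
def lexProd {V1 V2 : Type*} (G1 : SimpleGraph V1) (G2 : SimpleGraph V2) :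
    SimpleGraph (V1 × V2) where
  Adj a b := G1.Adj a.1 b.1 ∨ (a.1 = b.1 ∧ G2.Adj a.2 b.2)
  symm := by
    constructor
    intro a b h
    rcases h with h | ⟨h1, h2⟩
    · exact Or.inl (G1.symm.symm _ _ h)
    · exact Or.inr ⟨h1.symm, G2.symm.symm _ _ h2⟩
  loopless := by
    constructor
    intro a h
    rcases h with h | ⟨_, h2⟩
    · exact G1.loopless.irrefl a.1 h
    · exact G2.loopless.irrefl a.2 h2

section Aux

variable {V1 V2 : Type*} {G1 : SimpleGraph V1} {G2 : SimpleGraph V2}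

/-- Project a walk in the lexicographic product with distinct first coordinates
to a walk in `G1` of no greater length. -/
lemma lexProd_proj_walk {a b : V1 × V2} (p : (lexProd G1 G2).Walk a b) :
    a.1 ≠ b.1 → ∃ q : G1.Walk a.1 b.1, q.length ≤ p.length := by
  induction p with
  | nil => intro h; exact absurd rfl h
  | @cons x c y h p ih =>
    intro hxy
    by_cases hxc : x.1 = c.1
    · obtain ⟨q, hq⟩ := ih (hxc ▸ hxy)
      exact ⟨q.copy hxc.symm rfl, by simpa using hq.trans (Nat.le_succ _)⟩
    · have hadj : G1.Adj x.1 c.1 := h.resolve_right (fun h' => hxc h'.1)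
      by_cases hcy : c.1 = y.1
      · exact ⟨(hcy ▸ hadj).toWalk, by simp⟩
      · obtain ⟨q, hq⟩ := ih hcy
        exact ⟨Walk.cons hadj q, by simpa using hq⟩

/-- Lift a walk in `G1` (between distinct vertices) to a walk in the lexicographic
product of no greater length. -/
lemma lexProd_lift_walk : ∀ {u v : V1} (q : G1.Walk u v) (a b : V2), u ≠ v →
    ∃ p : (lexProd G1 G2).Walk (u, a) (v, b), p.length ≤ q.length := by
  intro u v q
  induction q with
  | nil => intro a b h; exact absurd rfl h
  | @cons x c y h q ih =>
    intro a b _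
    by_cases hcy : c = y
    · subst hcy
      exact ⟨(show (lexProd G1 G2).Adj (x, a) (c, b) from Or.inl h).toWalk, by simp⟩
    · obtain ⟨p, hp⟩ := ih a b hcy
      exact ⟨Walk.cons (Or.inl h) p, by show p.length + 1 ≤ _ + 1; omega⟩

/-- Lift a walk in `G2` to a walk in the lexicographic product with constant first
coordinate. -/
lemma lexProd_lift_walk2 (u : V1) : ∀ {a b : V2} (q : G2.Walk a b),
    ∃ p : (lexProd G1 G2).Walk (u, a) (u, b), p.length ≤ q.length := by
  intro a b q
  induction q with
  | nil => exact ⟨Walk.nil, le_rfl⟩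
  | @cons x c y h q ih =>
    obtain ⟨p, hp⟩ := ih
    exact ⟨Walk.cons (show (lexProd G1 G2).Adj (u, x) (u, c) from Or.inr ⟨rfl, h⟩) p,
      by simpa using hp⟩

/-- A walk in the lexicographic product starting at an isolated first coordinate
stays in that fiber and projects to a walk in `G2`. -/
lemma lexProd_isolated_walk {x y : V1 × V2} (p : (lexProd G1 G2).Walk x y) :
    (∀ w, ¬ G1.Adj x.1 w) → x.1 = y.1 ∧ ∃ q : G2.Walk x.2 y.2, q.length ≤ p.length := by
  induction p with
  | nil => intro _; exact ⟨rfl, Walk.nil, le_rfl⟩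
  | @cons a c b h p ih =>
    intro hiso
    rcases h with h | ⟨h1, h2⟩
    · exact absurd h (hiso _)
    · obtain ⟨he, q, hq⟩ := ih (fun w => h1 ▸ hiso w)
      exact ⟨h1.trans he, Walk.cons h2 q, by show q.length + 1 ≤ p.length + 1; omega⟩

lemma edist_le_lexProd_edist {a b : V1 × V2} (h : a.1 ≠ b.1) :
    G1.edist a.1 b.1 ≤ (lexProd G1 G2).edist a b := by
  rcases eq_or_ne ((lexProd G1 G2).edist a b) ⊤ with ht | ht
  · exact ht ▸ le_top
  · obtain ⟨p, hp⟩ := exists_walk_of_edist_ne_top ht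
    obtain ⟨q, hq⟩ := lexProd_proj_walk p h
    calc G1.edist a.1 b.1 ≤ q.length := edist_le q
      _ ≤ (p.length : ℕ∞) := by exact_mod_cast hq
      _ = _ := hp

lemma lexProd_edist_le_edist {u v : V1} (a b : V2) (h : u ≠ v) :
    (lexProd G1 G2).edist (u, a) (v, b) ≤ G1.edist u v := by
  rcases eq_or_ne (G1.edist u v) ⊤ with ht | ht
  · exact ht ▸ le_top
  · obtain ⟨q, hq⟩ := exists_walk_of_edist_ne_top ht
    obtain ⟨p, hp⟩ := lexProd_lift_walk q a b h
    calc (lexProd G1 G2).edist (u, a) (v, b) ≤ p.length := edist_le p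
      _ ≤ (q.length : ℕ∞) := by exact_mod_cast hp
      _ = _ := hq

lemma lexProd_edist_le_edist2 (u : V1) (a b : V2) :
    (lexProd G1 G2).edist (u, a) (u, b) ≤ G2.edist a b := by
  rcases eq_or_ne (G2.edist a b) ⊤ with ht | ht
  · exact ht ▸ le_top
  · obtain ⟨q, hq⟩ := exists_walk_of_edist_ne_top ht
    obtain ⟨p, hp⟩ := lexProd_lift_walk2 u q
    calc (lexProd G1 G2).edist (u, a) (u, b) ≤ p.length := edist_le p
      _ ≤ (q.length : ℕ∞) := by exact_mod_cast hp
      _ = _ := hq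

lemma edist2_le_lexProd_edist {u : V1} (hiso : ∀ w, ¬ G1.Adj u w) (a b : V2) :
    G2.edist a b ≤ (lexProd G1 G2).edist (u, a) (u, b) := by
  rcases eq_or_ne ((lexProd G1 G2).edist (u, a) (u, b)) ⊤ with ht | ht
  · exact ht ▸ le_top
  · obtain ⟨p, hp⟩ := exists_walk_of_edist_ne_top ht
    obtain ⟨-, q, hq⟩ := lexProd_isolated_walk p hiso
    calc G2.edist a b ≤ q.length := edist_le q
      _ ≤ (p.length : ℕ∞) := by exact_mod_cast hq
      _ = _ := hp

lemma lexProd_edist_eq_top {u v : V1} (hiso : ∀ w, ¬ G1.Adj u w) (h : u ≠ v) (a b : V2) :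
    (lexProd G1 G2).edist (u, a) (v, b) = ⊤ := by
  apply edist_eq_top_of_not_reachable
  rintro ⟨p⟩
  obtain ⟨he, -⟩ := lexProd_isolated_walk p hiso
  exact h he

lemma lexProd_edist_le_two {u w : V1} (hw : G1.Adj u w) (a b : V2) :
    (lexProd G1 G2).edist (u, a) (u, b) ≤ 2 := by
  refine le_trans (edist_le (Walk.cons
      (show (lexProd G1 G2).Adj (u, a) (w, a) from Or.inl hw)
      (Walk.cons (show (lexProd G1 G2).Adj (w, a) (u, b) from Or.inl hw.symm)
        Walk.nil))) ?_
  simp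

variable {V : Type*} [Fintype V] {G : SimpleGraph V} {k : ℕ}

lemma kIndepNum_bddAbove (G : SimpleGraph V) (k : ℕ) :
    BddAbove {n | ∃ s : Finset V, s.card = n ∧
      ∀ u ∈ s, ∀ v ∈ s, u ≠ v → (k : ℕ∞) < G.edist u v} := by
  refine ⟨Fintype.card V, ?_⟩
  rintro n ⟨s, rfl, -⟩
  exact s.card_le_univ

lemma le_kIndepNum {s : Finset V}
    (h : ∀ u ∈ s, ∀ v ∈ s, u ≠ v → (k : ℕ∞) < G.edist u v) :
    s.card ≤ kIndepNum G k :=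
  le_csSup (kIndepNum_bddAbove G k) ⟨s, rfl, h⟩

lemma exists_kIndepNum_set (G : SimpleGraph V) (k : ℕ) :
    ∃ s : Finset V, s.card = kIndepNum G k ∧
      ∀ u ∈ s, ∀ v ∈ s, u ≠ v → (k : ℕ∞) < G.edist u v := by
  have h := Nat.sSup_mem (s := {n | ∃ s : Finset V, s.card = n ∧
      ∀ u ∈ s, ∀ v ∈ s, u ≠ v → (k : ℕ∞) < G.edist u v})
    ⟨0, ∅, by simp⟩ (kIndepNum_bddAbove G k)
  exact h

lemma one_le_kIndepNum [Nonempty V] (G : SimpleGraph V) (k : ℕ) :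
    1 ≤ kIndepNum G k := by
  have := le_kIndepNum (G := G) (k := k) (s := {Classical.arbitrary V}) ?_
  · simpa using this
  · intro u hu v hv huv
    simp only [Finset.mem_singleton] at hu hv
    exact absurd (hu.trans hv.symm) huv

end Aux

theorem kIndepNum_lexProd {V1 V2 : Type*} [Fintype V1] [Fintype V2] [Nonempty V2]
    (G1 : SimpleGraph V1) (G2 : SimpleGraph V2) (k : ℕ) (hk : 2 ≤ k) :
    kIndepNum (lexProd G1 G2) k =
      kIndepNum G1 k + Nat.card {v : V1 // ∀ w, ¬ G1.Adj v w} * (kIndepNum G2 k - 1) := by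
  classical
  set I : Finset V1 := Finset.univ.filter (fun v => ∀ w, ¬ G1.Adj v w) with hI
  have hIcard : Nat.card {v : V1 // ∀ w, ¬ G1.Adj v w} = I.card := by
    simp [hI, Nat.card_eq_fintype_card, Fintype.card_subtype]
  have hmemI : ∀ v : V1, v ∈ I ↔ ∀ w, ¬ G1.Adj v w := by
    intro v; simp [hI]
  have hα2 : 1 ≤ kIndepNum G2 k := one_le_kIndepNum G2 k
  rw [hIcard]
  apply le_antisymm
  · -- upper bound
    obtain ⟨S, hScard, hSind⟩ := exists_kIndepNum_set (lexProd G1 G2) k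
    rw [← hScard]
    set T : Finset V1 := S.image Prod.fst with hT
    have hcard : S.card = ∑ u ∈ T, (S.filter fun p => p.1 = u).card :=
      Finset.card_eq_sum_card_image Prod.fst S
    -- T is k-independent in G1
    have hTind : ∀ u ∈ T, ∀ v ∈ T, u ≠ v → (k : ℕ∞) < G1.edist u v := by
      intro u hu v hv huv
      obtain ⟨⟨u1, a⟩, hua, rfl⟩ := Finset.mem_image.mp hu
      obtain ⟨⟨v1, b⟩, hvb, rfl⟩ := Finset.mem_image.mp hv
      have := hSind _ hua _ hvb (by simp; intro h; exact absurd h huv)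
      exact lt_of_lt_of_le this (lexProd_edist_le_edist a b huv)
    have hTcard : T.card ≤ kIndepNum G1 k := le_kIndepNum hTind
    -- fiber bounds
    have hfiber : ∀ u ∈ T, (S.filter fun p => p.1 = u).card ≤
        (if u ∈ I then kIndepNum G2 k else 1) := by
      intro u _
      by_cases hu : u ∈ I
      · rw [if_pos hu]
        have hiso := (hmemI u).mp hu
        set F := S.filter fun p => p.1 = u with hF
        have hinj : Set.InjOn (Prod.snd : V1 × V2 → V2) ↑F := by
          intro p hp q hq hpq
          simp only [hF, Finset.coe_filter, Set.mem_setOf_eq] at hp hq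
          exact Prod.ext (hp.2.trans hq.2.symm) hpq
        rw [← Finset.card_image_of_injOn hinj]
        apply le_kIndepNum
        intro a ha b hb hab
        obtain ⟨p, hp, rfl⟩ := Finset.mem_image.mp ha
        obtain ⟨q, hq, rfl⟩ := Finset.mem_image.mp hb
        simp only [hF, Finset.mem_filter] at hp hq
        have hne : p ≠ q := fun h => hab (by rw [h])
        have h1 := hSind _ hp.1 _ hq.1 hne
        have h2 : (lexProd G1 G2).edist p q ≤ G2.edist p.2 q.2 := by
          have : p = (u, p.2) := Prod.ext hp.2 rfl
          have hq' : q = (u, q.2) := Prod.ext hq.2 rfl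
          rw [this, hq']
          exact lexProd_edist_le_edist2 u p.2 q.2
        exact lt_of_lt_of_le h1 h2
      · rw [if_neg hu]
        rw [Finset.card_le_one]
        intro p hp q hq
        simp only [Finset.mem_filter] at hp hq
        by_contra hne
        have h1 := hSind _ hp.1 _ hq.1 hne
        obtain ⟨w, hw⟩ : ∃ w, G1.Adj u w := by
          by_contra h
          push_neg at h
          exact hu ((hmemI u).mpr h)
        have h2 : (lexProd G1 G2).edist p q ≤ 2 := by
          have : p = (u, p.2) := Prod.ext hp.2 rfl
          have hq' : q = (u, q.2) := Prod.ext hq.2 rfl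
          rw [this, hq']
          exact lexProd_edist_le_two hw p.2 q.2
        have : (k : ℕ∞) < 2 := lt_of_lt_of_le h1 h2
        have : (k : ℕ∞) < (k : ℕ∞) :=
          lt_of_lt_of_le this (by exact_mod_cast hk)
        exact lt_irrefl _ this
    have hsum : S.card ≤ ∑ u ∈ T, (if u ∈ I then kIndepNum G2 k else 1) := by
      rw [hcard]; exact Finset.sum_le_sum hfiber
    have hsplit : ∑ u ∈ T, (if u ∈ I then kIndepNum G2 k else 1) =
        (T.filter (· ∈ I)).card * kIndepNum G2 k + (T.filter (· ∉ I)).card := by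
      rw [← Finset.sum_filter_add_sum_filter_not T (· ∈ I)]
      congr 1
      · rw [Finset.sum_congr rfl (fun x hx => if_pos (Finset.mem_filter.mp hx).2)]
        simp [mul_comm]
      · rw [Finset.sum_congr rfl (fun x hx => if_neg (Finset.mem_filter.mp hx).2)]
        simp
    have hi : (T.filter (· ∈ I)).card ≤ I.card :=
      Finset.card_le_card (fun x hx => (Finset.mem_filter.mp hx).2)
    have hin : (T.filter (· ∈ I)).card + (T.filter (· ∉ I)).card = T.card :=
      Finset.card_filter_add_card_filter_not _
    obtain ⟨m, hm⟩ : ∃ m, kIndepNum G2 k = m + 1 :=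
      ⟨kIndepNum G2 k - 1, by omega⟩
    calc S.card ≤ (T.filter (· ∈ I)).card * kIndepNum G2 k + (T.filter (· ∉ I)).card := by
          rw [← hsplit]; exact hsum
      _ = (T.filter (· ∈ I)).card * m +
          ((T.filter (· ∈ I)).card + (T.filter (· ∉ I)).card) := by rw [hm]; ring
      _ ≤ I.card * m + kIndepNum G1 k := by
          gcongr
          rw [hin]; exact hTcard
      _ = kIndepNum G1 k + I.card * (kIndepNum G2 k - 1) := by
          rw [hm]; simp [Nat.add_comm]
  · -- lower bound
    obtain ⟨S1, hS1card, hS1ind⟩ := exists_kIndepNum_set G1 k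
    obtain ⟨S2, hS2card, hS2ind⟩ := exists_kIndepNum_set G2 k
    set S1' := S1 ∪ I with hS1'
    have hS1'ind : ∀ u ∈ S1', ∀ v ∈ S1', u ≠ v → (k : ℕ∞) < G1.edist u v := by
      intro u hu v hv huv
      by_cases hui : ∀ w, ¬ G1.Adj u w
      · have : ¬ G1.Reachable u v := by
          rintro ⟨p⟩
          cases p with
          | nil => exact huv rfl
          | cons h _ => exact hui _ h
        rw [edist_eq_top_of_not_reachable this]
        exact lt_top_iff_ne_top.mpr (ENat.coe_ne_top _)
      · by_cases hvi : ∀ w, ¬ G1.Adj v w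
        · have : ¬ G1.Reachable v u := by
            rintro ⟨p⟩
            cases p with
            | nil => exact huv rfl.symm
            | cons h _ => exact hvi _ h
          rw [SimpleGraph.edist_comm, edist_eq_top_of_not_reachable this]
          exact lt_top_iff_ne_top.mpr (ENat.coe_ne_top _)
        · have hu' : u ∈ S1 := by
            rcases Finset.mem_union.mp hu with h | h
            · exact h
            · exact absurd ((hmemI u).mp h) hui
          have hv' : v ∈ S1 := by
            rcases Finset.mem_union.mp hv with h | h
            · exact h
            · exact absurd ((hmemI v).mp h) hvi
          exact hS1ind u hu' v hv' huv
    have hS1'card : S1'.card = kIndepNum G1 k :=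
      le_antisymm (le_kIndepNum hS1'ind)
        (hS1card ▸ Finset.card_le_card Finset.subset_union_left)
    have hIsub : I ⊆ S1' := Finset.subset_union_right
    obtain ⟨v0⟩ := ‹Nonempty V2›
    set S : Finset (V1 × V2) := (S1' \ I) ×ˢ {v0} ∪ I ×ˢ S2 with hS
    have hmemS : ∀ p : V1 × V2, p ∈ S ↔
        (p.1 ∈ S1' ∧ p.1 ∉ I ∧ p.2 = v0) ∨ (p.1 ∈ I ∧ p.2 ∈ S2) := by
      intro p
      obtain ⟨p1, p2⟩ := p
      simp only [hS, Finset.mem_union, Finset.mem_product, Finset.mem_sdiff,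
        Finset.mem_singleton]
      tauto
    have hSind : ∀ u ∈ S, ∀ v ∈ S, u ≠ v → (k : ℕ∞) < (lexProd G1 G2).edist u v := by
      rintro ⟨u1, u2⟩ hu ⟨w1, w2⟩ hv huv
      rw [hmemS] at hu hv
      by_cases h1 : u1 = w1
      · subst h1
        have h2 : u2 ≠ w2 := fun h => huv (by rw [h])
        rcases hu with ⟨-, hui, rfl⟩ | ⟨hui, hu2⟩
        · rcases hv with ⟨-, -, rfl⟩ | ⟨hvi, -⟩
          · exact absurd rfl h2
          · exact absurd hvi hui
        · rcases hv with ⟨-, hvi, -⟩ | ⟨-, hv2⟩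
          · exact absurd hui hvi
          · have := hS2ind _ hu2 _ hv2 h2
            exact lt_of_lt_of_le this (edist2_le_lexProd_edist ((hmemI u1).mp hui) u2 w2)
      · by_cases hui : u1 ∈ I
        · rw [lexProd_edist_eq_top ((hmemI u1).mp hui) h1 u2 w2]
          exact lt_top_iff_ne_top.mpr (ENat.coe_ne_top _)
        · by_cases hvi : w1 ∈ I
          · rw [SimpleGraph.edist_comm, lexProd_edist_eq_top ((hmemI w1).mp hvi) (Ne.symm h1) w2 u2]
            exact lt_top_iff_ne_top.mpr (ENat.coe_ne_top _)
          · have hu1 : u1 ∈ S1' := by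
              rcases hu with ⟨h, -, -⟩ | ⟨h, -⟩
              · exact h
              · exact absurd h hui
            have hv1 : w1 ∈ S1' := by
              rcases hv with ⟨h, -, -⟩ | ⟨h, -⟩
              · exact h
              · exact absurd h hvi
            have := hS1'ind _ hu1 _ hv1 h1
            exact lt_of_lt_of_le this (edist_le_lexProd_edist h1)
    have hScard : S.card = (kIndepNum G1 k - I.card) + I.card * kIndepNum G2 k := by
      rw [hS, Finset.card_union_of_disjoint, Finset.card_product, Finset.card_product,
        Finset.card_sdiff_of_subset hIsub, hS1'card, hS2card]
      · simp
      · rw [Finset.disjoint_left]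
        rintro ⟨p1, p2⟩ hp hq
        rw [Finset.mem_product, Finset.mem_sdiff] at hp
        rw [Finset.mem_product] at hq
        exact hp.1.2 hq.1
    have hIle : I.card ≤ kIndepNum G1 k := by
      rw [← hS1'card]; exact Finset.card_le_card hIsub
    have := le_kIndepNum hSind
    rw [hScard] at this
    refine le_trans (le_of_eq ?_) this
    obtain ⟨m, hm⟩ : ∃ m, kIndepNum G2 k = m + 1 :=
      ⟨kIndepNum G2 k - 1, by omega⟩
    rw [hm]
    simp only [Nat.add_sub_cancel]
    have h1 : I.card * (m + 1) = I.card * m + I.card := by ring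
    omega
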